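/- For all integers p, q, r: if p is even then x_{p,q,r} ▷ a = x_{p−1,−q,−r}, and if p is odd then x_{p,q,r} ▷ a = x_{p+1,−q,−r}. -/
import Mathlib


/-- A quandle as in the paper: a set with operations `▷` and `▷⁻¹` satisfying
axioms A1, A2, A3. -/
class PaperQuandle (Q : Type*) where
  rhd : Q → Q → Q
  rhdInv : Q → Q → Q
  fix : ∀ x : Q, rhd x x = x
  inv_rhd : ∀ x y : Q, rhdInv (rhd x y) y = x
  rhd_inv : ∀ x y : Q, rhd (rhdInv x y) y = x
  self_distrib : ∀ x y z : Q, rhd (rhd x y) z = rhd (rhd x z) (rhd y z)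

infixl:65 " ▷ " => PaperQuandle.rhd
infixl:65 " ▷⁻¹ " => PaperQuandle.rhdInv

/-- The point symmetry at `u`, as a permutation of `Q`: `x ↦ x ▷ u`,
with inverse `x ↦ x ▷⁻¹ u`. -/
def ptSym {Q : Type*} [PaperQuandle Q] (u : Q) : Equiv.Perm Q where
  toFun x := x ▷ u
  invFun x := x ▷⁻¹ u
  left_inv x := PaperQuandle.inv_rhd x u
  right_inv x := PaperQuandle.rhd_inv x u

/-- The element `x_{p,q,r} = a^{(ba)^t c^q d^r}` if `p = 2t`, and
`a^{(ba)^t b c^q d^r}` if `p = 2t+1`.  Here the word `ba` (apply `b`, then `a`)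
is the permutation `ptSym a * ptSym b`. -/
def X {Q : Type*} [PaperQuandle Q] (a b c d : Q) (p q r : ℤ) : Q :=
  if Even p then
    (ptSym d ^ r) ((ptSym c ^ q) (((ptSym a * ptSym b) ^ (p / 2)) a))
  else
    (ptSym d ^ r) ((ptSym c ^ q) ((((ptSym a * ptSym b) ^ ((p - 1) / 2)) a) ▷ b))


theorem quandle_group_aux {G : Type*} [Group G] (A B C D E F : G) (k : ℤ)
    (hA : A * A = 1) (hB : B * B = 1) (hE : E * E = 1) (hF : F * F = 1)
    (h1 : A * E * D = 1) (h2 : F * D * B = 1)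
    (h3 : E * (A * ((B * A) ^ k * C)) = 1)
    (h4 : A * ((B * A) ^ (k - 1) * (C * F)) = 1) :
    (∀ q r s : ℤ, A * (D ^ r * (C ^ q * (A * B) ^ s))
        = D ^ (-r) * (C ^ (-q) * (B * (A * B) ^ (s - 1)))) ∧
    (∀ q r s : ℤ, A * (D ^ r * (C ^ q * (B * (A * B) ^ s)))
        = D ^ (-r) * (C ^ (-q) * (A * B) ^ (s + 1))) := by
  have hAi : A⁻¹ = A := inv_eq_of_mul_eq_one_left hA
  have hBi : B⁻¹ = B := inv_eq_of_mul_eq_one_left hB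
  have hEi : E⁻¹ = E := inv_eq_of_mul_eq_one_left hE
  have hFi : F⁻¹ = F := inv_eq_of_mul_eq_one_left hF
  have hE1 : E = A * D⁻¹ := by
    have h : A * E = D⁻¹ := eq_inv_of_mul_eq_one_left h1
    calc E = A * (A * E) := by rw [← mul_assoc, hA, one_mul]
    _ = A * D⁻¹ := by rw [h]
  have hF1 : F = B * D⁻¹ := by
    have h : F * D = B⁻¹ := eq_inv_of_mul_eq_one_left h2
    calc F = F * D * D⁻¹ := by group
    _ = B * D⁻¹ := by rw [h, hBi]
  have hADA : A * D * A = D⁻¹ := by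
    have h := hE
    rw [hE1] at h
    have hD : A * D⁻¹ * A = D := by
      have h' : A * D⁻¹ * A * D⁻¹ = 1 := by rw [← h]; group
      calc A * D⁻¹ * A = A * D⁻¹ * A * D⁻¹ * D := by group
      _ = D := by rw [h', one_mul]
    have h9 := congrArg Inv.inv hD
    simp only [mul_inv_rev, inv_inv, hAi] at h9
    rw [← h9]; group
  have RI : D⁻¹ = (B * A) ^ k * C := by
    have h : A * ((B * A) ^ k * C) = E⁻¹ := eq_inv_of_mul_eq_one_right h3
    rw [hEi, hE1] at h
    exact (mul_left_cancel h).symm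
  have RII : D = A * ((B * A) ^ (k - 1) * (C * B)) := by
    rw [hF1] at h4
    have h6 : (A * ((B * A) ^ (k - 1) * (C * B))) * D⁻¹ = 1 := by
      rw [← h4]; group
    have h7 := eq_inv_of_mul_eq_one_left h6
    rw [inv_inv] at h7
    exact h7.symm
  have hBAinv : (B * A)⁻¹ = A * B := by rw [mul_inv_rev, hAi, hBi]
  have hDval : D = C⁻¹ * (B * A) ^ (-k) := by
    calc D = ((B * A) ^ k * C)⁻¹ := by rw [← RI, inv_inv]
    _ = C⁻¹ * (B * A) ^ (-k) := by rw [mul_inv_rev, ← zpow_neg]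
  have E1 : A * (C⁻¹ * (B * A) ^ (-k)) * A = (B * A) ^ k * C := by
    rw [← hDval, hADA, RI]
  have E2 : C⁻¹ * (B * A) ^ (-k) = A * ((B * A) ^ (k - 1) * (C * B)) := by
    rw [← hDval, RII]
  have step : (B * A) ^ (k - 1) * (C * B) * A = (B * A) ^ k * C := by
    rw [← E1, E2]
    rw [show A * (A * ((B * A) ^ (k - 1) * (C * B))) * A
        = (A * A) * ((B * A) ^ (k - 1) * (C * B) * A) from by group, hA, one_mul]
  have h8 : (C * B) * A = (B * A) * C := by
    calc (C * B) * A = (B * A) ^ (1 - k) * ((B * A) ^ (k - 1) * (C * B) * A) := by group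
    _ = (B * A) ^ (1 - k) * ((B * A) ^ k * C) := by rw [step]
    _ = (B * A) * C := by group
  have hcomm : Commute (B * A) C := by
    show B * A * C = C * (B * A)
    rw [← mul_assoc]; exact h8.symm
  -- conjugation by A inverts powers of (B*A)
  have hconj : ∀ j : ℤ, A * (B * A) ^ j * A = (B * A) ^ (-j) := by
    intro j
    have hc : (MulAut.conj A) (B * A) = (B * A)⁻¹ := by
      rw [MulAut.conj_apply, hAi, hBAinv]
      calc A * (B * A) * A = A * (B * (A * A)) := by group
      _ = A * B := by rw [hA, mul_one]
    calc A * (B * A) ^ j * A = (MulAut.conj A) ((B * A) ^ j) := by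
          rw [MulAut.conj_apply, hAi]
    _ = ((MulAut.conj A) (B * A)) ^ j := map_zpow _ _ _
    _ = ((B * A)⁻¹) ^ j := by rw [hc]
    _ = (B * A) ^ (-j) := by rw [inv_zpow, ← zpow_neg]
  have hACiA : A * C⁻¹ * A = C := by
    have e3 : (A * C⁻¹ * A) * (B * A) ^ k = (B * A) ^ k * C := by
      calc (A * C⁻¹ * A) * (B * A) ^ k
          = (A * C⁻¹ * A) * (A * (B * A) ^ (-k) * A) := by rw [hconj, neg_neg]
      _ = A * C⁻¹ * (A * A) * (B * A) ^ (-k) * A := by group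
      _ = A * (C⁻¹ * (B * A) ^ (-k)) * A := by rw [hA]; group
      _ = (B * A) ^ k * C := E1
    have e4 : (B * A) ^ k * C = C * (B * A) ^ k := (hcomm.zpow_left k).eq
    rw [e4] at e3
    exact mul_right_cancel e3
  have hACA : A * C * A = C⁻¹ := by
    have h9 := congrArg Inv.inv hACiA
    simp only [mul_inv_rev, inv_inv, hAi] at h9
    rw [← h9]; group
  -- general: conjugation-inversion extends to powers and slides
  have gen : ∀ X : G, A * X * A = X⁻¹ → ∀ j : ℤ, A * X ^ j = X ^ (-j) * A := by
    intro X hX j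
    have hc : (MulAut.conj A) X = X⁻¹ := by rw [MulAut.conj_apply, hAi]; exact hX
    have hXj : A * X ^ j * A⁻¹ = X ^ (-j) := by
      rw [show A * X ^ j * A⁻¹ = (MulAut.conj A) (X ^ j) from rfl, map_zpow, hc]
      group
    calc A * X ^ j = (A * X ^ j * A⁻¹) * A := by group
    _ = X ^ (-j) * A := by rw [hXj]
  have hADr := gen D hADA
  have hACq := gen C hACA
  constructor
  · intro q r s
    have hs : A * (A * B) ^ s = B * (A * B) ^ (s - 1) := by
      have hpow : (A * B) ^ s = (A * B) * (A * B) ^ (s - 1) := by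
        rw [← zpow_one_add, show (1 : ℤ) + (s - 1) = s from by ring]
      calc A * (A * B) ^ s = A * ((A * B) * (A * B) ^ (s - 1)) := by rw [hpow]
      _ = (A * A) * (B * (A * B) ^ (s - 1)) := by simp only [mul_assoc]
      _ = B * (A * B) ^ (s - 1) := by rw [hA, one_mul]
    calc A * (D ^ r * (C ^ q * (A * B) ^ s))
        = (A * D ^ r) * (C ^ q * (A * B) ^ s) := by group
    _ = D ^ (-r) * ((A * C ^ q) * (A * B) ^ s) := by rw [hADr r]; simp only [mul_assoc]
    _ = D ^ (-r) * (C ^ (-q) * (A * (A * B) ^ s)) := by rw [hACq q]; simp only [mul_assoc]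
    _ = D ^ (-r) * (C ^ (-q) * (B * (A * B) ^ (s - 1))) := by rw [hs]
  · intro q r s
    have hs : A * (B * (A * B) ^ s) = (A * B) ^ (s + 1) := by
      calc A * (B * (A * B) ^ s) = (A * B) * (A * B) ^ s := by simp only [mul_assoc]
      _ = (A * B) ^ (1 + s) := (zpow_one_add _ _).symm
      _ = (A * B) ^ (s + 1) := by rw [add_comm]
    calc A * (D ^ r * (C ^ q * (B * (A * B) ^ s)))
        = (A * D ^ r) * (C ^ q * (B * (A * B) ^ s)) := by simp only [mul_assoc]
    _ = D ^ (-r) * ((A * C ^ q) * (B * (A * B) ^ s)) := by rw [hADr r]; simp only [mul_assoc]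
    _ = D ^ (-r) * (C ^ (-q) * (A * (B * (A * B) ^ s))) := by rw [hACq q]; simp only [mul_assoc]
    _ = D ^ (-r) * (C ^ (-q) * (A * B) ^ (s + 1)) := by rw [hs]

theorem stmt_13
    {Q : Type*} [PaperQuandle Q] (k : ℤ) (m n : ℕ) (a b c d e f : Q)
    (hk : 1 ≤ k) (hm : 0 < m) (hn : 0 < n)
    (rel_a : ∀ x : Q, x ▷ a ▷ a = x)
    (rel_b : ∀ x : Q, x ▷ b ▷ b = x)
    (rel_e : ∀ x : Q, x ▷ e ▷ e = x)
    (rel_f : ∀ x : Q, x ▷ f ▷ f = x)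
    (rel_c : ∀ x : Q, (ptSym c ^ m) x = x)
    (rel_d : ∀ x : Q, (ptSym d ^ n) x = x)
    (rel_dea : ∀ x : Q, x ▷ d ▷ e ▷ a = x)
    (rel_bdf : ∀ x : Q, x ▷ b ▷ d ▷ f = x)
    (rel_cke : ∀ x : Q, (((ptSym b * ptSym a) ^ k) (x ▷ c)) ▷ a ▷ e = x)
    (rel_fca : ∀ x : Q, (((ptSym b * ptSym a) ^ (k - 1)) (x ▷ f ▷ c)) ▷ a = x) :
    ∀ p q r : ℤ,
      (Even p → X a b c d p q r ▷ a = X a b c d (p - 1) (-q) (-r)) ∧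
      (Odd p → X a b c d p q r ▷ a = X a b c d (p + 1) (-q) (-r)) := by
  set A := ptSym a with hAdef
  set B := ptSym b with hBdef
  set C := ptSym c with hCdef
  set D := ptSym d with hDdef
  set E := ptSym e with hEdef
  set F := ptSym f with hFdef
  have hrhd_a : ∀ x : Q, x ▷ a = A x := fun x => rfl
  have hrhd_b : ∀ x : Q, x ▷ b = B x := fun x => rfl
  have hA : A * A = 1 := Equiv.ext fun x => by
    simpa [Equiv.Perm.mul_apply, ← hrhd_a] using rel_a x
  have hB : B * B = 1 := Equiv.ext fun x => by
    simpa [Equiv.Perm.mul_apply, ← hrhd_b] using rel_b x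
  have hE : E * E = 1 := Equiv.ext fun x => by
    simpa [Equiv.Perm.mul_apply, hEdef, ptSym] using rel_e x
  have hF : F * F = 1 := Equiv.ext fun x => by
    simpa [Equiv.Perm.mul_apply, hFdef, ptSym] using rel_f x
  have h1 : A * E * D = 1 := Equiv.ext fun x => by
    simpa [Equiv.Perm.mul_apply, hAdef, hDdef, hEdef, ptSym] using rel_dea x
  have h2 : F * D * B = 1 := Equiv.ext fun x => by
    simpa [Equiv.Perm.mul_apply, hBdef, hDdef, hFdef, ptSym] using rel_bdf x
  have h3 : E * (A * ((B * A) ^ k * C)) = 1 := Equiv.ext fun x => by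
    simpa [Equiv.Perm.mul_apply, hAdef, hBdef, hCdef, hEdef, ptSym] using rel_cke x
  have h4 : A * ((B * A) ^ (k - 1) * (C * F)) = 1 := Equiv.ext fun x => by
    simpa [Equiv.Perm.mul_apply, hAdef, hBdef, hCdef, hFdef, ptSym] using rel_fca x
  obtain ⟨keyE, keyO⟩ := quandle_group_aux A B C D E F k hA hB hE hF h1 h2 h3 h4
  intro p q r
  constructor
  · rintro ⟨t, rfl⟩
    have he1 : Even (t + t) := ⟨t, rfl⟩
    have ho1 : ¬ Even (t + t - 1) := by
      rw [Int.not_even_iff_odd]; exact ⟨t - 1, by ring⟩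
    rw [X, X, if_pos he1, if_neg ho1,
      show (t + t) / 2 = t from by omega,
      show (t + t - 1 - 1) / 2 = t - 1 from by omega]
    show A ((D ^ r) ((C ^ q) (((A * B) ^ t) a)))
        = (D ^ (-r)) ((C ^ (-q)) (B (((A * B) ^ (t - 1)) a)))
    have h := DFunLike.congr_fun (keyE q r t) a
    simpa [Equiv.Perm.mul_apply] using h
  · rintro ⟨t, rfl⟩
    have ho1 : ¬ Even (2 * t + 1) := by
      rw [Int.not_even_iff_odd]; exact ⟨t, rfl⟩
    have he1 : Even (2 * t + 1 + 1) := ⟨t + 1, by ring⟩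
    rw [X, X, if_neg ho1, if_pos he1,
      show (2 * t + 1 - 1) / 2 = t from by omega,
      show (2 * t + 1 + 1) / 2 = t + 1 from by omega]
    show A ((D ^ r) ((C ^ q) (B (((A * B) ^ t) a))))
        = (D ^ (-r)) ((C ^ (-q)) (((A * B) ^ (t + 1)) a))
    have h := DFunLike.congr_fun (keyO q r t) a
    simpa [Equiv.Perm.mul_apply] using h
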